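/- Let U be a nonprincipal ultrafilter on ℕ and P = ⟨[p_n, p_{n+1})⟩ an interval partition. For A ∈ U and p_n ≤ x < p_{n+1} set a^A(x) = |A ∩ [p_n, x)|, b^A(x) = |A ∩ [x, p_{n+1})|, c^A(x) = |A ∩ [p_n, p_{n+1})|. Then in the ultrapower ℕ^ℕ/U, the cut C generated upward by {c^A : A ∈ U} equals the maximum of the cuts generated upward by {a^A : A ∈ U} and {b^A : A ∈ U}. -/

import Mathlib

def Nonprincipal (U : Ultrafilter ℕ) : Prop := ∀ A : Set ℕ, A.Finite → A ∉ U

def UnboundedModU (U : Ultrafilter ℕ) (f : ℕ → ℕ) : Prop := ∀ n : ℕ, {x | n < f x} ∈ U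

def NondecrModU (U : Ultrafilter ℕ) (g : ℕ → ℕ) : Prop :=
  ∃ A ∈ U, ∀ x ∈ A, ∀ y ∈ A, x ≤ y → g x ≤ g y

def QSfor (U : Ultrafilter ℕ) (f : ℕ → ℕ) : Prop :=
  ∀ g : ℕ → ℕ, {x | g x ≤ f x} ∈ U → NondecrModU U g

def Selective (U : Ultrafilter ℕ) : Prop := ∀ g : ℕ → ℕ, NondecrModU U g

def Rapid (U : Ultrafilter ℕ) : Prop :=
  ∀ g : ℕ → ℕ, StrictMono g → ∃ A ∈ U, ∀ n, 1 ≤ n → (A ∩ Set.Iic (g n)).ncard < n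

def WeaklyRamsey (U : Ultrafilter ℕ) : Prop :=
  ∀ (k : ℕ) (c : ℕ → ℕ → Fin k), ∃ A ∈ U, ∃ i j : Fin k,
    ∀ x ∈ A, ∀ y ∈ A, x < y → c x y = i ∨ c x y = j

def leU (U : Ultrafilter ℕ) (f g : ℕ → ℕ) : Prop := {x | f x ≤ g x} ∈ U

def QPoint (U : Ultrafilter ℕ) : Prop :=
  ∀ p : ℕ → ℕ, p 0 = 0 → StrictMono p →
    ∃ A ∈ U, ∀ n, (A ∩ Set.Ico (p n) (p (n+1))).Subsingleton

theorem stmt16 (U : Ultrafilter ℕ) (hNP : Nonprincipal U)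
    (p : ℕ → ℕ) (hp0 : p 0 = 0) (hpm : StrictMono p)
    (a b c : Set ℕ → ℕ → ℕ)
    (habc : ∀ (A : Set ℕ) (n x : ℕ), p n ≤ x → x < p (n+1) →
      a A x = (A ∩ Set.Ico (p n) x).ncard ∧ b A x = (A ∩ Set.Ico x (p (n+1))).ncard ∧
      c A x = (A ∩ Set.Ico (p n) (p (n+1))).ncard) :
    ∀ h : ℕ → ℕ, (∃ A ∈ U, leU U (c A) h) ↔
      ((∃ A ∈ U, leU U (a A) h) ∧ (∃ A ∈ U, leU U (b A) h)) := by
  -- index function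
  set idx : ℕ → ℕ := fun x => Nat.findGreatest (fun n => p n ≤ x) x with hidxdef
  have hidx : ∀ x, p (idx x) ≤ x ∧ x < p (idx x + 1) := by
    intro x
    constructor
    · exact Nat.findGreatest_spec (P := fun n => p n ≤ x) (Nat.zero_le x) (show p 0 ≤ x by rw [hp0]; exact Nat.zero_le x)
    · by_contra hc
      push_neg at hc
      have h1 : idx x + 1 ≤ x := le_trans hpm.le_apply hc
      exact absurd hc (Nat.findGreatest_is_greatest (Nat.lt_succ_self _) h1).elim
  have hidxu : ∀ n x, p n ≤ x → x < p (n+1) → idx x = n := by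
    intro n x h1 h2
    by_contra hne
    rcases Nat.lt_or_ge (idx x) n with hlt | hge
    · have : p (idx x + 1) ≤ p n := hpm.monotone (by omega)
      exact absurd ((hidx x).2.trans_le (this.trans h1)) (lt_irrefl x)
    · have hgt : n < idx x := lt_of_le_of_ne hge (Ne.symm hne)
      have : p (n+1) ≤ p (idx x) := hpm.monotone (by omega)
      exact absurd (h2.trans_le (this.trans (hidx x).1)) (lt_irrefl x)
  have hfin : ∀ (S : Set ℕ) (u v : ℕ), (S ∩ Set.Ico u v).Finite :=
    fun S u v => Set.Finite.inter_of_right (Set.finite_Ico u v) S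
  have hsup : ∀ {s t : Set ℕ}, s ∈ U → s ⊆ t → t ∈ U := fun hs hst =>
    Ultrafilter.mem_coe.mp (Filter.mem_of_superset (Ultrafilter.mem_coe.mpr hs) hst)
  have hint : ∀ {s t : Set ℕ}, s ∈ U → t ∈ U → s ∩ t ∈ U := fun hs ht =>
    Ultrafilter.mem_coe.mp (Filter.inter_mem (Ultrafilter.mem_coe.mpr hs) (Ultrafilter.mem_coe.mpr ht))
  -- splitting: c = a + b
  have hsplit : ∀ (S : Set ℕ) (x : ℕ), c S x = a S x + b S x := by
    intro S x
    obtain ⟨h1, h2⟩ := hidx x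
    obtain ⟨ha, hb, hc⟩ := habc S (idx x) x h1 h2
    rw [ha, hb, hc]
    have hunion : S ∩ Set.Ico (p (idx x)) (p (idx x + 1)) =
        (S ∩ Set.Ico (p (idx x)) x) ∪ (S ∩ Set.Ico x (p (idx x + 1))) := by
      rw [← Set.inter_union_distrib_left, Set.Ico_union_Ico_eq_Ico h1 h2.le]
    have hdisj : Disjoint (S ∩ Set.Ico (p (idx x)) x) (S ∩ Set.Ico x (p (idx x + 1))) := by
      rw [Set.disjoint_left]
      rintro z ⟨_, _, hz1⟩ ⟨_, hz2, _⟩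
      omega
    rw [hunion, Set.ncard_union_eq hdisj (hfin _ _ _) (hfin _ _ _)]
  -- monotonicity in the set
  have hamono : ∀ (S T : Set ℕ) (x : ℕ), S ⊆ T → a S x ≤ a T x := by
    intro S T x hST
    obtain ⟨h1, h2⟩ := hidx x
    rw [(habc S (idx x) x h1 h2).1, (habc T (idx x) x h1 h2).1]
    exact Set.ncard_le_ncard (Set.inter_subset_inter_left _ hST) (hfin _ _ _)
  have hbmono : ∀ (S T : Set ℕ) (x : ℕ), S ⊆ T → b S x ≤ b T x := by
    intro S T x hST
    obtain ⟨h1, h2⟩ := hidx x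
    rw [(habc S (idx x) x h1 h2).2.1, (habc T (idx x) x h1 h2).2.1]
    exact Set.ncard_le_ncard (Set.inter_subset_inter_left _ hST) (hfin _ _ _)
  intro h
  constructor
  · rintro ⟨A, hA, hle⟩
    refine ⟨⟨A, hA, ?_⟩, ⟨A, hA, ?_⟩⟩ <;>
      exact hsup hle (fun x hx => by
        have := hsplit A x; simp only [Set.mem_setOf_eq] at hx ⊢; omega)
  · rintro ⟨⟨A, hA, hAle⟩, ⟨B, hB, hBle⟩⟩
    set D : Set ℕ := A ∩ B with hD
    have hDU : D ∈ U := hint hA hB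
    -- rank and interval count
    set rk : ℕ → ℕ := fun y => (D ∩ Set.Ico (p (idx y)) y).ncard with hrk
    set mm : ℕ → ℕ := fun y => (D ∩ Set.Ico (p (idx y)) (p (idx y + 1))).ncard with hmm
    set C1 : Set ℕ := {y | y ∈ D ∧ 2 * rk y < mm y} with hC1
    set C2 : Set ℕ := {y | y ∈ D ∧ ¬ (2 * rk y < mm y)} with hC2
    have hunion : C1 ∪ C2 = D := by
      ext y; simp only [hC1, hC2, Set.mem_union, Set.mem_setOf_eq]; tauto
    have hCU : C1 ∈ U ∨ C2 ∈ U := by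
      rw [← Ultrafilter.union_mem_iff, hunion]; exact hDU
    -- counting claims for a fixed x
    have key : ∀ (x : ℕ),
        (C1 ∩ Set.Ico (p (idx x)) (p (idx x + 1))).ncard ≤ (mm x + 1) / 2 ∧
        (C2 ∩ Set.Ico (p (idx x)) (p (idx x + 1))).ncard ≤ mm x / 2 := by
      intro x
      set n := idx x with hn
      set I := Set.Ico (p n) (p (n+1)) with hI
      set m := mm x with hm
      have hidxI : ∀ y ∈ I, idx y = n := fun y hy => hidxu n y hy.1 hy.2
      set rk' : ℕ → ℕ := fun y => (D ∩ Set.Ico (p n) y).ncard with hrk'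
      have hrkI : ∀ y ∈ I, rk y = rk' y := by
        intro y hy; simp only [hrk, hrk', hidxI y hy]
      have hmmI : ∀ y ∈ I, mm y = m := by
        intro y hy; simp only [hmm, hm, hidxI y hy]; rfl
      -- rk' is injective on D ∩ I, with values < m for members
      have hrkmono : ∀ y ∈ D ∩ I, ∀ z, y < z → rk' y < rk' z := by
        intro y hy z hyz
        apply Set.ncard_lt_ncard ?_ (hfin _ _ _)
        constructor
        · exact Set.inter_subset_inter_right _ (Set.Ico_subset_Ico_right hyz.le)
        · intro hsub
          have : y ∈ D ∩ Set.Ico (p n) y := hsub ⟨hy.1, hy.2.1, hyz⟩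
          exact absurd this.2.2 (lt_irrefl y)
      have hinj : Set.InjOn rk' (D ∩ I) := by
        intro y hy z hz hyz
        rcases lt_trichotomy y z with hlt | heq | hgt
        · exact absurd hyz (Nat.ne_of_lt (hrkmono y hy z hlt))
        · exact heq
        · exact absurd hyz.symm (Nat.ne_of_lt (hrkmono z hz y hgt))
      have hrklt : ∀ y ∈ D ∩ I, rk' y < m := by
        intro y hy
        have hmx : m = (D ∩ I).ncard := by
          simp only [hm, hmm, hI, hn]
        rw [hmx]
        apply Set.ncard_lt_ncard ?_ (hfin _ _ _)
        constructor
        · intro z hz; exact ⟨hz.1, hz.2.1, hz.2.2.trans_le hy.2.2.le⟩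
        · intro hsub
          have : y ∈ D ∩ Set.Ico (p n) y := hsub hy
          exact absurd this.2.2 (lt_irrefl y)
      have hmaps1 : ∀ y ∈ C1 ∩ I, rk' y ∈ Set.Ico 0 ((m+1)/2) := by
        intro y hy
        have h2 : 2 * rk y < mm y := hy.1.2
        rw [hrkI y hy.2, hmmI y hy.2] at h2
        exact ⟨Nat.zero_le _, by omega⟩
      have hmaps2 : ∀ y ∈ C2 ∩ I, rk' y ∈ Set.Ico ((m+1)/2) m := by
        intro y hy
        have hyDI : y ∈ D ∩ I := ⟨hy.1.1, hy.2⟩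
        have h2 : ¬ (2 * rk y < mm y) := hy.1.2
        rw [hrkI y hy.2, hmmI y hy.2] at h2
        have := hrklt y hyDI
        exact ⟨by omega, this⟩
      have hinj1 : Set.InjOn rk' (C1 ∩ I) := hinj.mono (Set.inter_subset_inter_left I (fun y hy => hy.1))
      have hinj2 : Set.InjOn rk' (C2 ∩ I) := hinj.mono (Set.inter_subset_inter_left I (fun y hy => hy.1))
      constructor
      · have := Set.ncard_le_ncard_of_injOn rk' hmaps1 hinj1 (Set.finite_Ico _ _)
        rwa [← Finset.coe_Ico, Set.ncard_coe_finset, Nat.card_Ico, Nat.sub_zero] at this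
      · have := Set.ncard_le_ncard_of_injOn rk' hmaps2 hinj2 (Set.finite_Ico _ _)
        rw [← Finset.coe_Ico, Set.ncard_coe_finset, Nat.card_Ico] at this
        omega
    -- the good set
    set G : Set ℕ := {x | a A x ≤ h x} ∩ {x | b B x ≤ h x} with hG
    have hGU : G ∈ U := hint hAle hBle
    have hGbound : ∀ x ∈ G, mm x ≤ 2 * h x := by
      intro x hx
      have h1 : mm x = c D x := by
        obtain ⟨h1, h2⟩ := hidx x
        rw [(habc D (idx x) x h1 h2).2.2]
      have h2 := hsplit D x
      have h3 := hamono D A x Set.inter_subset_left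
      have h4 := hbmono D B x Set.inter_subset_right
      have h5 : a A x ≤ h x := hx.1
      have h6 : b B x ≤ h x := hx.2
      omega
    rcases hCU with hC | hC
    · refine ⟨C1, hC, hsup hGU ?_⟩
      intro x hx
      obtain ⟨h1, h2⟩ := hidx x
      have hcx : c C1 x = (C1 ∩ Set.Ico (p (idx x)) (p (idx x + 1))).ncard :=
        (habc C1 (idx x) x h1 h2).2.2
      have := (key x).1
      have := hGbound x hx
      simp only [Set.mem_setOf_eq, hcx]
      omega
    · refine ⟨C2, hC, hsup hGU ?_⟩
      intro x hx
      obtain ⟨h1, h2⟩ := hidx x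
      have hcx : c C2 x = (C2 ∩ Set.Ico (p (idx x)) (p (idx x + 1))).ncard :=
        (habc C2 (idx x) x h1 h2).2.2
      have := (key x).2
      have := hGbound x hx
      simp only [Set.mem_setOf_eq, hcx]
      omega
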